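/- For all positive integers s, k with k ≤ s and k dividing s, the binomial coefficients satisfy C(s−k, s/k) / C(s, s/k) ≤ e^{−1}. -/

import Mathlib

lemma stmt12_key (n m : ℕ) : (n + 1) * Nat.choose n m = Nat.choose (n + 1) m * (n + 1 - m) := by
  rw [Nat.add_one_mul_choose_eq, Nat.choose_succ_right_eq]

lemma stmt12_main (s m : ℕ) : ∀ j, j ≤ s →
    Nat.choose (s - j) m * s ^ j ≤ Nat.choose s m * (s - m) ^ j := by
  intro j
  induction j with
  | zero => simp
  | succ j ih =>
    intro hj
    have hj' : j ≤ s := by omega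
    have hpos : 0 < s - j := by omega
    have hmul : (s - j - m) * s ≤ (s - m) * (s - j) := by
      rw [Nat.sub_mul (s - j) m s, Nat.sub_mul s m (s - j), Nat.mul_comm (s - j) s]
      exact Nat.sub_le_sub_left (Nat.mul_le_mul_left m (Nat.sub_le s j)) _
    have hkey : (s - j) * Nat.choose (s - j - 1) m = Nat.choose (s - j) m * (s - j - m) := by
      have := stmt12_key (s - j - 1) m
      rw [show s - j - 1 + 1 = s - j by omega] at this
      exact this
    have h1 : (s - j) * (Nat.choose (s - j - 1) m * s) ≤
        (s - j) * (Nat.choose (s - j) m * (s - m)) := by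
      calc (s - j) * (Nat.choose (s - j - 1) m * s)
          = (s - j) * Nat.choose (s - j - 1) m * s := by ring
        _ = Nat.choose (s - j) m * (s - j - m) * s := by rw [hkey]
        _ = Nat.choose (s - j) m * ((s - j - m) * s) := by ring
        _ ≤ Nat.choose (s - j) m * ((s - m) * (s - j)) := Nat.mul_le_mul_left _ hmul
        _ = (s - j) * (Nat.choose (s - j) m * (s - m)) := by ring
    have h2 : Nat.choose (s - j - 1) m * s ≤ Nat.choose (s - j) m * (s - m) :=
      Nat.le_of_mul_le_mul_left h1 hpos
    calc Nat.choose (s - (j + 1)) m * s ^ (j + 1)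
        = (Nat.choose (s - j - 1) m * s) * s ^ j := by
          rw [show s - (j + 1) = s - j - 1 by omega]; ring
      _ ≤ (Nat.choose (s - j) m * (s - m)) * s ^ j := Nat.mul_le_mul_right _ h2
      _ = (s - m) * (Nat.choose (s - j) m * s ^ j) := by ring
      _ ≤ (s - m) * (Nat.choose s m * (s - m) ^ j) := Nat.mul_le_mul_left _ (ih hj')
      _ = Nat.choose s m * (s - m) ^ (j + 1) := by ring

/-- For all positive integers `s`, `k` with `k ≤ s` and `k ∣ s`,
`C(s−k, s/k) / C(s, s/k) ≤ e⁻¹`. -/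
theorem stmt_12 (s k : ℕ) (hk : 0 < k) (hks : k ≤ s) (hdvd : k ∣ s) :
    ((Nat.choose (s - k) (s / k) : ℝ)) / (Nat.choose s (s / k) : ℝ) ≤ Real.exp (-1) := by
  set m := s / k with hm
  have hs : s = k * m := (Nat.mul_div_cancel' hdvd).symm
  have hspos : 0 < s := lt_of_lt_of_le hk hks
  have hmpos : 0 < m := Nat.div_pos hks hk
  have hms : m ≤ s := Nat.div_le_self s k
  -- real constants
  have hkR : (0:ℝ) < (k:ℝ) := by exact_mod_cast hk
  have hsR : (0:ℝ) < (s:ℝ) := by exact_mod_cast hspos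
  have hchoose : (0:ℝ) < (Nat.choose s m : ℝ) := by
    exact_mod_cast Nat.choose_pos hms
  have hnat := stmt12_main s m k hks
  have hcast : ((Nat.choose (s - k) m : ℝ)) * (s:ℝ)^k ≤
      (Nat.choose s m : ℝ) * ((s:ℝ) - (m:ℝ))^k := by
    have : ((s:ℝ) - (m:ℝ)) = ((s - m : ℕ) : ℝ) := by
      rw [Nat.cast_sub hms]
    rw [this]
    exact_mod_cast hnat
  have hstep : ((Nat.choose (s - k) m : ℝ)) / (Nat.choose s m : ℝ) ≤
      (((s:ℝ) - (m:ℝ)) / (s:ℝ)) ^ k := by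
    rw [div_pow, div_le_div_iff₀ hchoose (pow_pos hsR k)]
    linarith [hcast]
  have hfrac : ((s:ℝ) - (m:ℝ)) / (s:ℝ) = 1 - 1 / (k:ℝ) := by
    have hmR : (0:ℝ) < (m:ℝ) := by exact_mod_cast hmpos
    have hsR' : (s:ℝ) = (k:ℝ) * (m:ℝ) := by exact_mod_cast hs
    field_simp [hsR']
    rw [hsR']; ring
  have hbase0 : (0:ℝ) ≤ 1 - 1 / (k:ℝ) := by
    have : 1 / (k:ℝ) ≤ 1 := by
      rw [div_le_one hkR]; exact_mod_cast hk
    linarith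
  have hbase : 1 - 1 / (k:ℝ) ≤ Real.exp (-(1 / (k:ℝ))) := by
    have := Real.add_one_le_exp (-(1 / (k:ℝ)))
    linarith
  have hpow : (1 - 1 / (k:ℝ)) ^ k ≤ Real.exp (-1) := by
    calc (1 - 1 / (k:ℝ)) ^ k ≤ (Real.exp (-(1 / (k:ℝ)))) ^ k :=
          pow_le_pow_left₀ hbase0 hbase k
      _ = Real.exp ((k:ℝ) * (-(1 / (k:ℝ)))) := by rw [← Real.exp_nat_mul]
      _ = Real.exp (-1) := by
          congr 1
          field_simp
    
  calc ((Nat.choose (s - k) m : ℝ)) / (Nat.choose s m : ℝ)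
      ≤ (((s:ℝ) - (m:ℝ)) / (s:ℝ)) ^ k := hstep
    _ = (1 - 1 / (k:ℝ)) ^ k := by rw [hfrac]
    _ ≤ Real.exp (-1) := hpow
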